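/- Let N be a positive integer and let μ be a Borel measure on ℝ such that ∫_ℝ |x|^i dμ(x) < ∞ for all 0 ≤ i ≤ 2N−2. Let m_i = ∫_ℝ x^i dμ(x) denote the i-th moment of μ. Then ∫_{ℝ^N} ∏_{1≤j<k≤N} (x_j − x_k)² dμ(x₁)⋯dμ(x_N) = N! · det( m_{j+k} )_{0≤j,k≤N−1}. -/

import Mathlib

open MeasureTheory

private lemma pi_integral_prod' {α : Type*} [MeasurableSpace α] (μ : Measure α) [SigmaFinite μ]
    {n : ℕ} (f : Fin n → α → ℝ) :
    ∫ x : Fin n → α, ∏ i, f i (x i) ∂(Measure.pi fun _ => μ) = ∏ i, ∫ x, f i x ∂μ :=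
  MeasureTheory.integral_fin_nat_prod_eq_prod (μ := fun _ => μ) f

private lemma pi_integrable_prod' {α : Type*} [MeasurableSpace α] (μ : Measure α) [SigmaFinite μ]
    {n : ℕ} (f : Fin n → α → ℝ) (hf : ∀ i, Integrable (f i) μ) :
    Integrable (fun x : Fin n → α => ∏ i, f i (x i)) (Measure.pi fun _ => μ) :=
  MeasureTheory.Integrable.fin_nat_prod (μ := fun _ => μ) (f := f) hf

private lemma pair_prod {N : ℕ} (f : Fin N × Fin N → ℝ) :
    ∏ p ∈ Finset.univ.filter (fun p : Fin N × Fin N => p.1 < p.2), f p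
      = ∏ i : Fin N, ∏ j ∈ Finset.Ioi i, f (i, j) := by
  rw [Finset.prod_sigma']
  refine Finset.prod_nbij' (fun p => ⟨p.1, p.2⟩) (fun p => (p.1, p.2)) ?_ ?_ ?_ ?_ ?_ <;> simp

private lemma sgn_sq {n : ℕ} (σ : Equiv.Perm (Fin n)) :
    ((Equiv.Perm.sign σ : ℤ) : ℝ) * ((Equiv.Perm.sign σ : ℤ) : ℝ) = 1 := by
  rcases Int.units_eq_one_or (Equiv.Perm.sign σ) with h | h <;> simp [h]

/-- The Heine identity: the integral of the squared Vandermonde product against a product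
measure equals `N!` times the determinant of the Hankel matrix of moments. -/
theorem heine_identity (N : ℕ) (hN : 0 < N) (μ : Measure ℝ) [SigmaFinite μ]
    (hmom : ∀ i ≤ 2 * N - 2, Integrable (fun x : ℝ => |x| ^ i) μ) :
    ∫ x : Fin N → ℝ,
        (∏ p ∈ Finset.univ.filter (fun p : Fin N × Fin N => p.1 < p.2),
          (x p.1 - x p.2) ^ 2) ∂(Measure.pi fun _ => μ)
      = (N.factorial : ℝ) *
        (Matrix.of fun j k : Fin N => ∫ t : ℝ, t ^ ((j : ℕ) + (k : ℕ)) ∂μ).det := by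
  classical
  set m : ℕ → ℝ := fun i => ∫ t : ℝ, t ^ i ∂μ with hm
  set s : Equiv.Perm (Fin N) → ℝ := fun σ => ((Equiv.Perm.sign σ : ℤ) : ℝ) with hs
  -- integrability of monomials
  have hpow : ∀ i ≤ 2 * N - 2, Integrable (fun x : ℝ => x ^ i) μ := by
    intro i hi
    have h1 : Integrable (fun x : ℝ => ‖x ^ i‖) μ := by
      simpa [abs_pow] using hmom i hi
    exact (integrable_norm_iff (by fun_prop)).mp h1
  have hle : ∀ (σ τ : Equiv.Perm (Fin N)) (i : Fin N),
      (σ i : ℕ) + (τ i : ℕ) ≤ 2 * N - 2 := by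
    intro σ τ i
    have h1 : (σ i : ℕ) < N := (σ i).is_lt
    have h2 : (τ i : ℕ) < N := (τ i).is_lt
    omega
  -- Step 1: the integrand as a double sum over permutations
  have hintegrand : ∀ x : Fin N → ℝ,
      (∏ p ∈ Finset.univ.filter (fun p : Fin N × Fin N => p.1 < p.2), (x p.1 - x p.2) ^ 2)
        = ∑ σ : Equiv.Perm (Fin N), ∑ τ : Equiv.Perm (Fin N),
            s σ * s τ * ∏ i, x i ^ ((σ i : ℕ) + (τ i : ℕ)) := by
    intro x
    have hv : (Matrix.vandermonde x).det
        = ∑ σ : Equiv.Perm (Fin N), s σ * ∏ i, x i ^ (σ i : ℕ) := by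
      rw [← Matrix.det_transpose, Matrix.det_apply']
      refine Finset.sum_congr rfl fun σ _ => ?_
      simp [Matrix.vandermonde, hs, Matrix.transpose_apply]
    calc (∏ p ∈ Finset.univ.filter (fun p : Fin N × Fin N => p.1 < p.2), (x p.1 - x p.2) ^ 2)
        = ∏ i : Fin N, ∏ j ∈ Finset.Ioi i, (x j - x i) ^ 2 := by
          rw [pair_prod (fun p => (x p.1 - x p.2) ^ 2)]
          exact Finset.prod_congr rfl fun i _ => Finset.prod_congr rfl fun j _ => by ring
      _ = (Matrix.vandermonde x).det ^ 2 := by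
          rw [Matrix.det_vandermonde]
          simp [← Finset.prod_pow]
      _ = ∑ σ : Equiv.Perm (Fin N), ∑ τ : Equiv.Perm (Fin N),
            s σ * s τ * ∏ i, x i ^ ((σ i : ℕ) + (τ i : ℕ)) := by
          rw [sq, hv, Finset.sum_mul_sum]
          refine Finset.sum_congr rfl fun σ _ => Finset.sum_congr rfl fun τ _ => ?_
          rw [mul_mul_mul_comm, ← Finset.prod_mul_distrib]
          simp_rw [← pow_add]
  -- Step 2: compute the integral
  have hstep2 : ∫ x : Fin N → ℝ,
        (∏ p ∈ Finset.univ.filter (fun p : Fin N × Fin N => p.1 < p.2),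
          (x p.1 - x p.2) ^ 2) ∂(Measure.pi fun _ => μ)
      = ∑ σ : Equiv.Perm (Fin N), ∑ τ : Equiv.Perm (Fin N),
          s σ * s τ * ∏ i, m ((σ i : ℕ) + (τ i : ℕ)) := by
    have hintg : ∀ σ τ : Equiv.Perm (Fin N),
        Integrable (fun x : Fin N → ℝ => ∏ i, x i ^ ((σ i : ℕ) + (τ i : ℕ)))
          (Measure.pi fun _ => μ) := fun σ τ =>
      pi_integrable_prod' μ _ (fun i => hpow _ (hle σ τ i))
    simp_rw [hintegrand]
    rw [integral_finset_sum _ (fun σ _ => ?_)]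
    · refine Finset.sum_congr rfl fun σ _ => ?_
      rw [integral_finset_sum _ (fun τ _ => ((hintg σ τ).const_mul _))]
      refine Finset.sum_congr rfl fun τ _ => ?_
      rw [integral_const_mul, pi_integral_prod' μ (fun i t => t ^ ((σ i : ℕ) + (τ i : ℕ)))]
    · exact integrable_finset_sum _ (fun τ _ => ((hintg σ τ).const_mul _))
  rw [hstep2]
  -- Step 3: the combinatorial identity
  have hdetM : (Matrix.of fun j k : Fin N => ∫ t : ℝ, t ^ ((j : ℕ) + (k : ℕ)) ∂μ).det
      = ∑ π : Equiv.Perm (Fin N), s π * ∏ i, m ((π i : ℕ) + (i : ℕ)) := by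
    rw [Matrix.det_apply']
    refine Finset.sum_congr rfl fun π _ => ?_
    simp [hs, hm]
  have hinner : ∀ σ : Equiv.Perm (Fin N),
      (∑ τ : Equiv.Perm (Fin N), s σ * s τ * ∏ i, m ((σ i : ℕ) + (τ i : ℕ)))
        = ∑ π : Equiv.Perm (Fin N), s π * ∏ i, m ((π i : ℕ) + (i : ℕ)) := by
    intro σ
    rw [← Fintype.sum_equiv (Equiv.mulRight σ) _ _ (fun π => ?_)]
    have h1 : s (π * σ) = s π * s σ := by simp [hs]
    have h2 : ∏ i, m (((σ : Equiv.Perm (Fin N)) i : ℕ) + ((π * σ) i : ℕ))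
        = ∏ i, m ((π i : ℕ) + (i : ℕ)) := by
      rw [← Equiv.prod_comp σ (fun j => m ((π j : ℕ) + (j : ℕ)))]
      refine Finset.prod_congr rfl fun i _ => ?_
      simp [Equiv.Perm.mul_apply, Nat.add_comm]
    rw [Equiv.coe_mulRight, h2, h1]
    rw [show s σ * (s π * s σ) = s π * (s σ * s σ) by ring, sgn_sq σ, mul_one]
  calc ∑ σ : Equiv.Perm (Fin N), ∑ τ : Equiv.Perm (Fin N),
          s σ * s τ * ∏ i, m ((σ i : ℕ) + (τ i : ℕ))
      = ∑ _σ : Equiv.Perm (Fin N), ∑ π : Equiv.Perm (Fin N),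
          s π * ∏ i, m ((π i : ℕ) + (i : ℕ)) := Finset.sum_congr rfl fun σ _ => hinner σ
    _ = (N.factorial : ℝ) *
        (Matrix.of fun j k : Fin N => ∫ t : ℝ, t ^ ((j : ℕ) + (k : ℕ)) ∂μ).det := by
        rw [Finset.sum_const, hdetM]
        simp [Fintype.card_perm, mul_comm]
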